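/- Fix a prime p and a natural number m, and for j ∈ ℕ write q_j := ⌊j / p^m⌋. In ℚ_p[X] set binom(X,k) := X(X−1)⋯(X−k+1)/k! and ξ^⟨k⟩ := q_k! · binom(X,k). Then for all natural numbers k', k'': ξ^⟨k'⟩ · ξ^⟨k''⟩ = Σ_{l = max(k',k'')}^{k'+k''} ( q_{k'}! · q_{k''}! · l! / ( q_l! · (k'+k''−l)! · (l−k')! · (l−k'')! ) ) · ξ^⟨l⟩, an identity in ℚ_p[X]. -/

import Mathlib

open scoped BigOperators
open Polynomial

/-- The element `ξ^⟨k⟩ = q_k!·binom(X,k) = (q_k!/k!)·X(X−1)⋯(X−k+1)` of `ℚ_p[X]`,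
realizing the basis of the level-`m` distribution algebra `D^(m)(𝔾_m)`. -/
noncomputable def xiGm (p : ℕ) [Fact p.Prime] (m k : ℕ) : Polynomial ℚ_[p] :=
  ((Nat.factorial (k / p ^ m) : ℚ_[p]) / (Nat.factorial k : ℚ_[p])) •
    descPochhammer ℚ_[p] k

lemma key_choose (n a b : ℕ) :
    n.choose a * n.choose b =
      ∑ l ∈ Finset.Icc (max a b) (a + b), n.choose l * (l.choose a * a.choose (l - b)) := by
  rcases lt_or_ge n a with h | ha
  · rw [Nat.choose_eq_zero_of_lt h, zero_mul]
    symm; apply Finset.sum_eq_zero; intro l hl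
    simp only [Finset.mem_Icc] at hl
    rw [Nat.choose_eq_zero_of_lt (lt_of_lt_of_le h (le_trans (le_max_left a b) hl.1))]
    ring
  · have hre : (∑ l ∈ Finset.Icc (max a b) (a+b), n.choose l * (l.choose a * a.choose (l - b)))
        = ∑ j ∈ Finset.range (min a b + 1),
            n.choose (a+b-j) * ((a+b-j).choose a * a.choose (a-j)) := by
      apply Finset.sum_nbij' (i := fun l => a + b - l) (j := fun j => a + b - j)
      · intro l hl; simp only [Finset.mem_Icc] at hl; simp only [Finset.mem_range]; omega
      · intro j hj; simp only [Finset.mem_range] at hj; simp only [Finset.mem_Icc]; omega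
      · intro l hl; simp only [Finset.mem_Icc] at hl; omega
      · intro j hj; simp only [Finset.mem_range] at hj; omega
      · intro l hl; simp only [Finset.mem_Icc] at hl
        have h1 : a + b - (a + b - l) = l := by omega
        have h2 : l - b = a - (a + b - l) := by omega
        rw [h1, h2]
    rw [hre]
    have hterm : ∀ j ∈ Finset.range (min a b + 1),
        n.choose (a+b-j) * ((a+b-j).choose a * a.choose (a-j))
          = n.choose a * (a.choose j * (n-a).choose (b-j)) := by
      intro j hj
      simp only [Finset.mem_range] at hj
      have hja : j ≤ a := by omega
      have hjb : j ≤ b := by omega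
      have hsymm : a.choose (a - j) = a.choose j := Nat.choose_symm hja
      rcases le_or_gt (a + b - j) n with hle | hlt
      · have := Nat.choose_mul (n := n) (k := a + b - j) (s := a) (by omega)
        have heq : a + b - j - a = b - j := by omega
        rw [heq] at this
        rw [hsymm, ← mul_assoc, this]; ring
      · rw [Nat.choose_eq_zero_of_lt hlt,
          Nat.choose_eq_zero_of_lt (show n - a < b - j by omega)]
        ring
    rw [Finset.sum_congr rfl hterm, ← Finset.mul_sum]
    congr 1
    have hext : (∑ j ∈ Finset.range (min a b + 1), a.choose j * (n-a).choose (b-j))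
        = ∑ j ∈ Finset.range (b + 1), a.choose j * (n-a).choose (b-j) := by
      apply Finset.sum_subset (Finset.range_subset_range.2 (by omega))
      intro j hj hj'
      simp only [Finset.mem_range] at hj hj'
      rw [Nat.choose_eq_zero_of_lt (show a < j by omega)]
      ring
    rw [hext]
    have hv := Nat.add_choose_eq a (n - a) b
    rw [Nat.add_sub_cancel' ha] at hv
    rw [hv, Finset.Nat.sum_antidiagonal_eq_sum_range_succ_mk]

/-- The multiplication formula in `D^(m)(𝔾_m)`:
`ξ^⟨k'⟩·ξ^⟨k''⟩ = Σ_{l=max(k',k'')}^{k'+k''}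
  (q_{k'}!·q_{k''}!·l!/(q_l!·(k'+k''−l)!·(l−k')!·(l−k'')!))·ξ^⟨l⟩`. -/
theorem stmt_4 (p : ℕ) [Fact p.Prime] (m : ℕ) :
    ∀ k' k'' : ℕ,
      xiGm p m k' * xiGm p m k'' =
        ∑ l ∈ Finset.Icc (max k' k'') (k' + k''),
          (((Nat.factorial (k' / p ^ m) : ℚ_[p]) *
                (Nat.factorial (k'' / p ^ m) : ℚ_[p]) *
                (Nat.factorial l : ℚ_[p])) /
              ((Nat.factorial (l / p ^ m) : ℚ_[p]) *
                (Nat.factorial (k' + k'' - l) : ℚ_[p]) *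
                (Nat.factorial (l - k') : ℚ_[p]) *
                (Nat.factorial (l - k'') : ℚ_[p]))) •
            xiGm p m l := by
  intro a b
  have hf : ∀ k : ℕ, (Nat.factorial k : ℚ_[p]) ≠ 0 :=
    fun k => Nat.cast_ne_zero.2 (Nat.factorial_ne_zero k)
  apply Polynomial.eq_of_infinite_eval_eq
  have hinf : (Set.range ((↑) : ℕ → ℚ_[p])).Infinite :=
    Set.infinite_range_of_injective Nat.cast_injective
  refine hinf.mono ?_
  rintro x ⟨n, rfl⟩
  simp only [Set.mem_setOf_eq, xiGm, Polynomial.eval_mul, Polynomial.eval_finset_sum,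
    Polynomial.eval_smul, smul_eq_mul, descPochhammer_eval_eq_descFactorial]
  have hterm : ∀ l ∈ Finset.Icc (max a b) (a + b),
      (((Nat.factorial (a / p ^ m) : ℚ_[p]) * (Nat.factorial (b / p ^ m) : ℚ_[p]) *
            (Nat.factorial l : ℚ_[p])) /
          ((Nat.factorial (l / p ^ m) : ℚ_[p]) * (Nat.factorial (a + b - l) : ℚ_[p]) *
            (Nat.factorial (l - a) : ℚ_[p]) * (Nat.factorial (l - b) : ℚ_[p]))) *
        ((Nat.factorial (l / p ^ m) : ℚ_[p]) / (Nat.factorial l : ℚ_[p]) *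
          (n.descFactorial l : ℚ_[p]))
      = ((Nat.factorial (a / p ^ m) : ℚ_[p]) * (Nat.factorial (b / p ^ m) : ℚ_[p])) *
          ((n.choose l * (l.choose a * a.choose (l - b)) : ℕ) : ℚ_[p]) := by
    intro l hl
    simp only [Finset.mem_Icc, max_le_iff] at hl
    obtain ⟨⟨hal, hbl⟩, hlab⟩ := hl
    have h1 := Nat.choose_mul_factorial_mul_factorial hal
    have h2 := Nat.choose_mul_factorial_mul_factorial (show l - b ≤ a by omega)
    have h3 : a - (l - b) = a + b - l := by omega
    rw [h3] at h2
    have hfac : Nat.factorial l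
        = l.choose a * a.choose (l - b) *
            (Nat.factorial (l - a) * Nat.factorial (l - b) * Nat.factorial (a + b - l)) := by
      rw [← h1, ← h2]; ring
    have hdf : n.descFactorial l = Nat.factorial l * n.choose l :=
      Nat.descFactorial_eq_factorial_mul_choose n l
    have hfacQ : (Nat.factorial l : ℚ_[p])
        = ((l.choose a : ℕ) : ℚ_[p]) * ((a.choose (l - b) : ℕ) : ℚ_[p]) *
            ((Nat.factorial (l - a) : ℚ_[p]) * (Nat.factorial (l - b) : ℚ_[p]) *
              (Nat.factorial (a + b - l) : ℚ_[p])) := by exact_mod_cast congrArg Nat.cast hfac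
    have e1 : (Nat.factorial (l / p ^ m) : ℚ_[p]) / (Nat.factorial l : ℚ_[p]) *
        ((n.descFactorial l : ℕ) : ℚ_[p])
        = (Nat.factorial (l / p ^ m) : ℚ_[p]) * ((n.choose l : ℕ) : ℚ_[p]) := by
      rw [hdf]; push_cast; field_simp [hf l]
    rw [e1, div_mul_eq_mul_div, div_eq_iff
      (mul_ne_zero (mul_ne_zero (mul_ne_zero (hf _) (hf _)) (hf _)) (hf _)), hfacQ]
    push_cast
    ring
  rw [Finset.sum_congr rfl hterm, ← Finset.mul_sum, ← Nat.cast_sum, ← key_choose n a b]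
  have hdfa : (n.descFactorial a : ℚ_[p]) = (Nat.factorial a : ℚ_[p]) * (n.choose a : ℚ_[p]) := by
    rw [Nat.descFactorial_eq_factorial_mul_choose]; push_cast; ring
  have hdfb : (n.descFactorial b : ℚ_[p]) = (Nat.factorial b : ℚ_[p]) * (n.choose b : ℚ_[p]) := by
    rw [Nat.descFactorial_eq_factorial_mul_choose]; push_cast; ring
  rw [hdfa, hdfb]
  push_cast
  field_simp [hf]
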